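/- For all positive integers n and k, b(n;k) equals the sum, over all primary partitions π = (b_1, ..., b_k) of n into exactly k parts with b_k ≥ k, of the weight ω(π) = 2^{t(π)}, where t(π) = #{1 ≤ i ≤ k−1 : b_i > b_{i+1}} + (1 if b_k > k, and 0 if b_k = k). -/

import Mathlib

open Finset
open scoped Classical

namespace BasisPartitions

/-! ### Ordinary partitions -/

/-- The parts of a partition, listed in weakly decreasing order. -/
def sparts {n : ℕ} (π : n.Partition) : List ℕ := π.parts.sort (· ≥ ·)

/-- `conj L j` is the number of parts that are `≥ j`, i.e. the `j`-th part of the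
conjugate partition (for `j ≥ 1`). -/
def conj (L : List ℕ) (j : ℕ) : ℕ := L.countP (fun b => j ≤ b)

/-- The Durfee square size: the largest `k` such that the `k`-th part is `≥ k`. -/
def durfee (L : List ℕ) : ℕ := (List.range L.length).countP (fun i => i + 1 ≤ L.getD i 0)

/-- The `(i+1)`-st successive rank `r_{i+1} = b_{i+1} - c_{i+1}` (0-indexed `i`). -/
def rank (L : List ℕ) (i : ℕ) : ℤ := (L.getD i 0 : ℤ) - (conj L (i + 1) : ℤ)

/-- The successive rank vector `(r_1, ..., r_k)` where `k` is the Durfee square size. -/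
def ranks (L : List ℕ) : List ℤ := (List.range (durfee L)).map (rank L)

/-- A basis partition: the partitioned number is minimal among all partitions having
the same successive rank vector. -/
def IsBasis {n : ℕ} (π : n.Partition) : Prop :=
  ∀ (m : ℕ) (π' : m.Partition), ranks (sparts π') = ranks (sparts π) → n ≤ m

/-- The signature: the number of distinct part sizes below the Durfee square. -/
def sig (L : List ℕ) : ℕ := ((L.drop (durfee L)).dedup).length

/-- `b(n;k)`: the number of basis partitions of `n` with Durfee square size `k`. -/
noncomputable def bCount (n k : ℕ) : ℕ :=
  Nat.card {π : n.Partition // IsBasis π ∧ durfee (sparts π) = k}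

/-- `b(n,k,s)`: the number of basis partitions of `n` with Durfee square size `k`
and signature `s`. -/
noncomputable def bCount3 (n k s : ℕ) : ℕ :=
  Nat.card {π : n.Partition // IsBasis π ∧ durfee (sparts π) = k ∧ sig (sparts π) = s}

/-- `B(n;j)`: the number of basis partitions of `n` with signature `j`. -/
noncomputable def BCount (n j : ℕ) : ℕ :=
  Nat.card {π : n.Partition // IsBasis π ∧ sig (sparts π) = j}

/-- Rogers–Ramanujan condition: exactly `k` parts, consecutive gaps `≥ 2`, last part `≥ 1`. -/
def RR (L : List ℕ) (k : ℕ) : Prop :=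
  L.length = k ∧ (∀ i, i + 1 < k → L.getD (i + 1) 0 + 2 ≤ L.getD i 0) ∧ 1 ≤ L.getD (k - 1) 0

/-- `t(π)` for a Rogers–Ramanujan partition: the number of gaps `> 2`, plus 1 if the
last part is `> 1`. -/
def tRR (L : List ℕ) (k : ℕ) : ℕ :=
  ((Finset.range (k - 1)).filter (fun i => L.getD (i + 1) 0 + 2 < L.getD i 0)).card +
    (if 1 < L.getD (k - 1) 0 then 1 else 0)

/-- Primary condition: exactly `k` parts, each part `≥ k`. -/
def Primary (L : List ℕ) (k : ℕ) : Prop := L.length = k ∧ ∀ x ∈ L, k ≤ x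

/-- `t(π)` for a primary partition: the number of strict descents, plus 1 if the
last part is `> k`. -/
def tP (L : List ℕ) (k : ℕ) : ℕ :=
  ((Finset.range (k - 1)).filter (fun i => L.getD (i + 1) 0 < L.getD i 0)).card +
    (if k < L.getD (k - 1) 0 then 1 else 0)

/-- A complete basis partition: every `j` with `1 ≤ j ≤ k-1` occurs as a part of `π_b`
(a row below the Durfee square) or as a part of `π_r` (a column length strictly to the
right of the Durfee square). -/
def IsComplete {n : ℕ} (π : n.Partition) : Prop :=
  ∀ j : ℕ, 1 ≤ j → j < durfee (sparts π) →
    j ∈ (sparts π).drop (durfee (sparts π)) ∨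
      ∃ c : ℕ, durfee (sparts π) < c ∧ conj (sparts π) c = j

/-- `b_c(n)`: the number of complete basis partitions of `n`. -/
noncomputable def bc (n : ℕ) : ℕ := Nat.card {π : n.Partition // IsBasis π ∧ IsComplete π}

/-! ### Partitions with non-repeating odd parts and their 2-modular graphs -/

/-- Partitions with non-repeating (distinct) odd parts. -/
def Pod {n : ℕ} (π : n.Partition) : Prop := ∀ x, Odd x → π.parts.count x ≤ 1

/-- The size (sum of entries) of the `c`-th column (1-indexed) of the 2-modular graph. -/
def mcolSize (L : List ℕ) (c : ℕ) : ℕ :=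
  (L.map (fun x => if 2 * c ≤ x then 2 else if x = 2 * c - 1 then 1 else 0)).sum

/-- The length (number of entries) of the `c`-th column (1-indexed) of the 2-modular graph. -/
def mcolLen (L : List ℕ) (c : ℕ) : ℕ := L.countP (fun x => 2 * c - 1 ≤ x)

/-- The number of entries in a row of the 2-modular graph recording the part `x`,
namely `⌈x/2⌉`. -/
def mrowLen (x : ℕ) : ℕ := (x + 1) / 2

/-- The 2-modular Durfee square size: the largest `k` with `⌈b_k/2⌉ ≥ k`. -/
def mdurfee (L : List ℕ) : ℕ := (List.range L.length).countP (fun i => 2 * i + 1 ≤ L.getD i 0)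

/-- The `(i+1)`-st 2-modular successive rank: (size of row `i+1`) − (size of column `i+1`). -/
def mrank (L : List ℕ) (i : ℕ) : ℤ := (L.getD i 0 : ℤ) - (mcolSize L (i + 1) : ℤ)

/-- The 2-modular successive rank vector. -/
def mranks (L : List ℕ) : List ℤ := (List.range (mdurfee L)).map (mrank L)

/-- A minimal basis partition in `P_{o,d}`: the partitioned number is minimal among all
partitions with non-repeating odd parts having the same 2-modular successive rank vector. -/
def MinBasis {n : ℕ} (μ : n.Partition) : Prop :=
  Pod μ ∧ ∀ (m : ℕ) (μ' : m.Partition), Pod μ' →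
    mranks (sparts μ') = mranks (sparts μ) → n ≤ m

/-- A basis partition in `P_{o,d}`: no row of the 2-modular graph strictly below the Durfee
square has size equal to the size of a column strictly to the right of the Durfee square. -/
def PodBasis {n : ℕ} (π : n.Partition) : Prop :=
  Pod π ∧ ∀ i, mdurfee (sparts π) ≤ i → i < (sparts π).length →
    ∀ c, mdurfee (sparts π) < c → mcolSize (sparts π) c ≠ (sparts π).getD i 0

/-- The signature of a basis partition in `P_{o,d}`: the number of distinct sizes among the
rows of the 2-modular graph strictly below the Durfee square. -/
def msig (L : List ℕ) : ℕ := ((L.drop (mdurfee L)).dedup).length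

/-- The ℓ-signature: the number of distinct lengths among the rows of the 2-modular
graph strictly below the Durfee square. -/
def lsig (L : List ℕ) : ℕ := (((L.drop (mdurfee L)).map mrowLen).dedup).length

/-- `b(n;j)` for `P_{o,d}`: the number of basis partitions of `n` in `P_{o,d}` with
signature `j`. -/
noncomputable def podB (n j : ℕ) : ℕ := Nat.card {π : n.Partition // PodBasis π ∧ msig (sparts π) = j}

/-- The number of odd parts. -/
def numOdd (L : List ℕ) : ℕ := L.countP (fun x => x % 2 = 1)

/-- A special partition: distinct parts with consecutive differences `≥ 4`, where a
difference equal to `4` is permitted only when both parts are even. -/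
def Special (L : List ℕ) : Prop :=
  ∀ i, i + 1 < L.length →
    L.getD (i + 1) 0 + 4 ≤ L.getD i 0 ∧
      (L.getD i 0 = L.getD (i + 1) 0 + 4 → Even (L.getD i 0) ∧ Even (L.getD (i + 1) 0))

/-- The `i`-th part of a special partition, with the convention that the part just after
the last one is `-2`. -/
def hpart (L : List ℕ) (i : ℕ) : ℤ := if i < L.length then (L.getD i 0 : ℤ) else -2

/-- `ℓ(π)`: the number of gaps `> 4` in a special partition, with the convention
`h_{k+1} = -2`. -/
def ell (L : List ℕ) : ℕ :=
  ((Finset.range L.length).filter (fun i => 4 < hpart L i - hpart L (i + 1))).card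



/-! ### Auxiliary lemmas -/
section Aux
set_option linter.unusedSectionVars false

lemma countP_sorted_lt_iff (M : List ℕ) (hM : M.Pairwise (· ≥ ·)) (c j : ℕ) :
    j < M.countP (fun x => c ≤ x) ↔ j < M.length ∧ c ≤ M.getD j 0 := by
  induction M generalizing j with
  | nil => simp
  | cons a t ih =>
    have ht : t.Pairwise (· ≥ ·) := hM.of_cons
    by_cases hca : c ≤ a
    · rw [List.countP_cons]
      simp only [hca, decide_eq_true_eq, if_pos]
      cases j with
      | zero => simp [hca]
      | succ j =>
        rw [List.length_cons, List.getD_cons_succ]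
        constructor
        · intro h
          have := (ih ht j).mp (by omega)
          exact ⟨by omega, this.2⟩
        · intro ⟨h1, h2⟩
          have := (ih ht j).mpr ⟨by omega, h2⟩
          omega
    · have hzero : (a :: t).countP (fun x => c ≤ x) = 0 := by
        rw [List.countP_eq_zero]
        intro x hx
        rcases List.mem_cons.mp hx with rfl | hx
        · simpa using hca
        · have : x ≤ a := (List.pairwise_cons.mp hM).1 x hx
          simp; omega
      rw [hzero]
      simp only [Nat.not_lt_zero, false_iff, not_and, not_le]
      intro hj
      have : (a :: t).getD j 0 ≤ a := by
        cases j with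
        | zero => simp [List.getD]
        | succ j =>
          simp only [List.getD_cons_succ]
          have hjt : j < t.length := by simpa using hj
          have : t.get ⟨j, hjt⟩ ≤ a := (List.pairwise_cons.mp hM).1 _ (t.get_mem _)
          rw [List.getD_eq_getElem _ _ hjt]
          simpa using this
      omega

-- downward-closed countP on range
lemma countP_range_lt_iff (m : ℕ) (p : ℕ → Bool)
    (hp : ∀ i j, i ≤ j → j < m → p j → p i) (i : ℕ) :
    i < (List.range m).countP p ↔ i < m ∧ p i := by
  induction m with
  | zero => simp
  | succ m ih =>
    rw [List.range_succ, List.countP_append]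
    by_cases hm : p m
    · have hall : ∀ j < m + 1, p j := fun j hj => hp j m (by omega) (by omega) hm
      have h1 : (List.range m).countP p = m := by
        rw [List.countP_eq_length.mpr (fun a ha => hall a (by simp at ha; omega))]
        simp
      simp [h1, hm]
      intro h; exact hall i (by omega)
    · have h2 : [m].countP p = 0 := by simp [hm]
      rw [h2, Nat.add_zero, ih (fun i j hij hj => hp i j hij (by omega))]
      constructor
      · rintro ⟨ha, hb⟩; exact ⟨by omega, hb⟩
      · rintro ⟨ha, hb⟩
        refine ⟨?_, hb⟩
        rcases Nat.lt_succ_iff_lt_or_eq.mp ha with h | h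
        · exact h
        · subst h; exact absurd hb hm


lemma getD_anti {L : List ℕ} (hL : L.Pairwise (· ≥ ·)) {i j : ℕ} (hij : i ≤ j) :
    L.getD j 0 ≤ L.getD i 0 := by
  by_cases hj : j < L.length
  · have hi : i < L.length := lt_of_le_of_lt hij hj
    rw [List.getD_eq_getElem _ _ hi, List.getD_eq_getElem _ _ hj]
    rcases eq_or_lt_of_le hij with h | h
    · subst h; exact le_refl _
    · exact List.pairwise_iff_getElem.mp hL i j hi hj h
  · rw [List.getD_eq_default _ _ (by omega)]
    exact Nat.zero_le _

lemma durfee_lt_iff {L : List ℕ} (hL : L.Pairwise (· ≥ ·)) (i : ℕ) :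
    i < durfee L ↔ i < L.length ∧ i + 1 ≤ L.getD i 0 := by
  have := countP_range_lt_iff L.length (fun i => decide (i + 1 ≤ L.getD i 0))
    (fun i j hij hj hpj => by
      simp only [decide_eq_true_eq] at *
      have := getD_anti hL hij
      omega) i
  simpa [durfee] using this

lemma durfee_le_length (L : List ℕ) : durfee L ≤ L.length := by
  simpa [durfee] using (List.countP_le_length (l := List.range L.length)
    (p := fun i => decide (i + 1 ≤ L.getD i 0)))

section Decomp
variable {L : List ℕ} {k : ℕ}

lemma getD_ge_of_lt {i : ℕ} (hL : L.Pairwise (· ≥ ·)) (hk : durfee L = k) (hi : i < k) :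
    k ≤ L.getD i 0 := by
  have h1 : k - 1 < durfee L := by omega
  have := (durfee_lt_iff hL (k - 1)).mp h1
  have h2 : L.getD (k-1) 0 ≤ L.getD i 0 := getD_anti hL (by omega)
  omega

lemma getD_le_of_ge {i : ℕ} (hL : L.Pairwise (· ≥ ·)) (hk : durfee L = k) (hi : k ≤ i) :
    L.getD i 0 ≤ k := by
  have h2 : L.getD i 0 ≤ L.getD k 0 := getD_anti hL hi
  have h1 : ¬ (k < durfee L) := by omega
  rw [durfee_lt_iff hL] at h1
  by_cases hlen : k < L.length
  · have : ¬ (k + 1 ≤ L.getD k 0) := fun h => h1 ⟨hlen, h⟩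
    omega
  · have : L.getD i 0 = 0 := List.getD_eq_default _ _ (by omega)
    omega

lemma conj_anti (L : List ℕ) {c c' : ℕ} (h : c ≤ c') : conj L c' ≤ conj L c := by
  apply List.countP_mono_left
  intro x _ hx
  simp only [decide_eq_true_eq] at *
  omega

lemma conj_lt_iff (hL : L.Pairwise (· ≥ ·)) (c j : ℕ) :
    j < conj L c ↔ j < L.length ∧ c ≤ L.getD j 0 :=
  countP_sorted_lt_iff L hL c j

lemma conj_ge_of_lt {i : ℕ} (hL : L.Pairwise (· ≥ ·)) (hk : durfee L = k) (hkpos : 0 < k)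
    (hi : i < k) : k ≤ conj L (i + 1) := by
  have hlen := durfee_le_length L
  have h1 : k - 1 < conj L (i + 1) := by
    rw [conj_lt_iff hL]
    have := getD_ge_of_lt hL hk (show k - 1 < k by omega)
    exact ⟨by omega, by omega⟩
  omega

lemma conj_le_of_ge {i : ℕ} (hL : L.Pairwise (· ≥ ·)) (hk : durfee L = k) (hi : k ≤ i) :
    conj L (i + 1) ≤ k := by
  by_contra h
  have h1 : k < conj L (i + 1) := by omega
  rw [conj_lt_iff hL] at h1
  have := getD_le_of_ge hL hk (le_refl k)
  omega

end Decomp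

-- sum lemmas
lemma sum_eq_range_getD (M : List ℕ) : M.sum = ∑ i ∈ Finset.range M.length, M.getD i 0 := by
  induction M with
  | nil => simp
  | cons a t ih =>
    rw [List.sum_cons, List.length_cons, Finset.sum_range_succ', ih]
    simp [Nat.add_comm]

lemma sum_eq_sum_countP (M : List ℕ) (k : ℕ) (h : ∀ x ∈ M, x ≤ k) :
    M.sum = ∑ i ∈ Finset.range k, M.countP (fun x => i + 1 ≤ x) := by
  induction M with
  | nil => simp
  | cons a t ih =>
    have ha : a ≤ k := h a (by simp)
    have ht := ih (fun x hx => h x (by simp [hx]))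
    simp only [List.countP_cons, List.sum_cons]
    rw [Finset.sum_add_distrib, ← ht]
    have hfil : Finset.filter (fun i => (decide (a ≥ i + 1)) = true) (Finset.range k)
        = Finset.range a := by
      ext x; simp; omega
    have : ∑ i ∈ Finset.range k, (if (decide (a ≥ i + 1)) = true then 1 else 0) = a := by
      rw [Finset.sum_boole, hfil]; simp
    simp only [ge_iff_le] at this ⊢
    omega




/-- Row excesses. -/
def eF (L : List ℕ) (k : ℕ) (i : ℕ) : ℕ := L.getD i 0 - k
/-- Column excesses. -/
def fF (L : List ℕ) (k : ℕ) (i : ℕ) : ℕ := conj L (i + 1) - k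

section eFfF
variable {L : List ℕ} {k : ℕ} (hL : L.Pairwise (· ≥ ·)) (hk : durfee L = k) (hkpos : 0 < k)
include hL hk

omit hk in
lemma eF_anti {i j : ℕ} (hij : i ≤ j) : eF L k j ≤ eF L k i := by
  have := getD_anti hL hij; unfold eF; omega

lemma eF_zero {i : ℕ} (hi : k ≤ i) : eF L k i = 0 := by
  have := getD_le_of_ge hL hk hi; unfold eF; omega

lemma getD_eq_eF {i : ℕ} (hi : i < k) : L.getD i 0 = k + eF L k i := by
  have := getD_ge_of_lt hL hk hi; unfold eF; omega

omit hL hk in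
lemma fF_anti {i j : ℕ} (hij : i ≤ j) : fF L k j ≤ fF L k i := by
  have := conj_anti L (show i + 1 ≤ j + 1 by omega); unfold fF; omega

lemma fF_zero {i : ℕ} (hi : k ≤ i) : fF L k i = 0 := by
  have := conj_le_of_ge hL hk hi; unfold fF; omega

include hkpos in
lemma conj_eq_fF {i : ℕ} (hi : i < k) : conj L (i + 1) = k + fF L k i := by
  have := conj_ge_of_lt hL hk hkpos hi; unfold fF; omega

include hkpos in
lemma ranks_decomp :
    ranks L = (List.range k).map (fun i => (eF L k i : ℤ) - (fF L k i : ℤ)) := by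
  unfold ranks
  rw [hk]
  apply List.map_congr_left
  intro i hi
  rw [List.mem_range] at hi
  unfold rank
  rw [getD_eq_eF hL hk hi, conj_eq_fF hL hk hkpos hi]
  push_cast; ring

lemma take_mem_ge {x : ℕ} (hx : x ∈ L.take k) : k ≤ x := by
  rw [List.mem_iff_getElem] at hx
  obtain ⟨i, hi, rfl⟩ := hx
  have hik : i < k := by simp at hi; omega
  have := getD_ge_of_lt hL hk hik
  rw [List.getElem_take]
  rw [List.getD_eq_getElem _ _ (by simp at hi; omega)] at this
  exact this

lemma drop_mem_le {x : ℕ} (hx : x ∈ L.drop k) : x ≤ k := by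
  rw [List.mem_iff_getElem] at hx
  obtain ⟨i, hi, rfl⟩ := hx
  rw [List.getElem_drop]
  have hlen : k + i < L.length := by simp at hi; omega
  have := getD_le_of_ge hL hk (show k ≤ k + i by omega)
  rw [List.getD_eq_getElem _ _ hlen] at this
  omega

lemma countP_drop_eq_fF {i : ℕ} (hi : i < k) :
    (L.drop k).countP (fun x => i + 1 ≤ x) = fF L k i := by
  have hlen : k ≤ L.length := hk ▸ durfee_le_length L
  have hsplit : conj L (i + 1) = (L.take k).countP (fun x => i + 1 ≤ x)
      + (L.drop k).countP (fun x => i + 1 ≤ x) := by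
    unfold conj
    rw [← List.countP_append, List.take_append_drop]
  have htake : (L.take k).countP (fun x => i + 1 ≤ x) = k := by
    rw [List.countP_eq_length.mpr]
    · rw [List.length_take]; omega
    · intro x hx
      have := take_mem_ge hL hk hx
      simp; omega
  unfold fF
  have := conj_ge_of_lt hL hk (by omega) hi
  omega

include hkpos in
lemma sum_decomp :
    L.sum = k * k + ∑ i ∈ Finset.range k, (eF L k i + fF L k i) := by
  have hlen : k ≤ L.length := hk ▸ durfee_le_length L
  have hsplit : L.sum = (L.take k).sum + (L.drop k).sum := by
    rw [← List.sum_append, List.take_append_drop]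
  have htake : (L.take k).sum = ∑ i ∈ Finset.range k, (k + eF L k i) := by
    rw [sum_eq_range_getD]
    have hlt : (L.take k).length = k := by rw [List.length_take]; omega
    rw [hlt]
    apply Finset.sum_congr rfl
    intro i hi
    rw [Finset.mem_range] at hi
    rw [List.getD_eq_getElem _ _ (by omega), List.getElem_take,
      ← List.getD_eq_getElem _ _ (by omega), getD_eq_eF hL hk hi]
  have hdrop : (L.drop k).sum = ∑ i ∈ Finset.range k, fF L k i := by
    rw [sum_eq_sum_countP (L.drop k) k (fun x hx => drop_mem_le hL hk hx)]
    exact Finset.sum_congr rfl fun i hi => countP_drop_eq_fF hL hk (Finset.mem_range.mp hi)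
  rw [hsplit, htake, hdrop, Finset.sum_add_distrib, Finset.sum_const, Finset.card_range,
    Finset.sum_add_distrib]
  ring

end eFfF




lemma list_map_range_sum (m : ℕ) (h : ℕ → ℕ) :
    ((List.range m).map h).sum = ∑ i ∈ Finset.range m, h i := by
  induction m with
  | zero => simp
  | succ m ih => rw [List.range_succ, Finset.sum_range_succ, List.map_append, List.sum_append, ih]; simp

lemma countP_range_eq_sum (m : ℕ) (p : ℕ → Bool) :
    (List.range m).countP p = ∑ i ∈ Finset.range m, if p i then 1 else 0 := by
  induction m with
  | zero => simp
  | succ m ih =>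
    rw [List.range_succ, Finset.sum_range_succ, List.countP_append, ih]
    simp [List.countP_cons]

section Build

variable (k : ℕ) (e f : ℕ → ℕ)

/-- The list of parts of a partition with Durfee square `k`, row excesses `e`, and
column excesses `f`. -/
def buildL : List ℕ :=
  (List.range k).map (fun i => k + e i) ++
    (List.range (f 0)).map (fun j => (List.range k).countP (fun i => j + 1 ≤ f i))

variable {k e f}
variable (hkpos : 0 < k)
  (he : ∀ i j, i ≤ j → e j ≤ e i) (he0 : ∀ i, k ≤ i → e i = 0)
  (hf : ∀ i j, i ≤ j → f j ≤ f i) (hf0 : ∀ i, k ≤ i → f i = 0)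

lemma buildL_length : (buildL k e f).length = k + f 0 := by simp [buildL]

lemma buildL_getD_left {i : ℕ} (hi : i < k) : (buildL k e f).getD i 0 = k + e i := by
  unfold buildL
  rw [List.getD_append _ _ _ _ (by simpa using hi),
    List.getD_eq_getElem _ _ (by simpa using hi)]
  simp

include hf in
lemma buildL_g_lt_iff {i j : ℕ} (hi : i < k) :
    i + 1 ≤ (List.range k).countP (fun i' => decide (j + 1 ≤ f i')) ↔ j + 1 ≤ f i := by
  have := countP_range_lt_iff k (fun i' => decide (j + 1 ≤ f i'))
    (fun a b hab hb hpb => by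
      simp only [decide_eq_true_eq] at *
      have := hf a b hab; omega) i
  simp only [decide_eq_true_eq] at this
  constructor
  · intro h; exact ((this.mp (by omega))).2
  · intro h; have := this.mpr ⟨hi, h⟩; omega

include hf in
lemma buildL_getD_right {j : ℕ} (hj : j < f 0) :
    (buildL k e f).getD (k + j) 0 = (List.range k).countP (fun i => j + 1 ≤ f i) := by
  unfold buildL
  rw [List.getD_append_right _ _ _ _ (by simpa using Nat.le_add_right k j)]
  simp only [List.length_map, List.length_range]
  rw [Nat.add_sub_cancel_left, List.getD_eq_getElem _ _ (by simpa using hj)]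
  simp

lemma buildL_g_le : ∀ j, (List.range k).countP (fun i => decide (j + 1 ≤ f i)) ≤ k := by
  intro j
  simpa using List.countP_le_length (l := List.range k) (p := fun i => decide (j + 1 ≤ f i))

include he hf in
lemma buildL_sorted : (buildL k e f).Pairwise (· ≥ ·) := by
  unfold buildL
  refine List.pairwise_append.mpr ⟨?_, ?_, ?_⟩
  · refine List.pairwise_map.mpr ?_
    exact (List.pairwise_lt_range).imp (fun {a b} hab => by
      have := he a b (le_of_lt hab); omega)
  · refine List.pairwise_map.mpr ?_
    refine (List.pairwise_lt_range).imp (fun {a b} hab => ?_)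
    apply List.countP_mono_left
    intro x _ hx
    simp only [decide_eq_true_eq] at *
    omega
  · intro x hx y hy
    simp only [List.mem_map, List.mem_range] at hx hy
    obtain ⟨i, hi, rfl⟩ := hx
    obtain ⟨j, hj, rfl⟩ := hy
    have := buildL_g_le (k := k) (f := f) j
    simp only [ge_iff_le]
    omega

include hkpos hf in
lemma buildL_pos : ∀ x ∈ buildL k e f, 0 < x := by
  intro x hx
  unfold buildL at hx
  rw [List.mem_append] at hx
  rcases hx with hx | hx <;> simp only [List.mem_map, List.mem_range] at hx <;>
    obtain ⟨j, hj, rfl⟩ := hx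
  · omega
  · have := (buildL_g_lt_iff hf (show 0 < k from hkpos) (j := j))
    simp only [Nat.zero_add] at this
    have h2 := this.mpr (by omega)
    omega

include hkpos he hf in
lemma buildL_durfee : durfee (buildL k e f) = k := by
  have hs : (buildL k e f).Pairwise (· ≥ ·) := buildL_sorted he hf
  have hlt : ∀ i, i < durfee (buildL k e f) ↔ i < k := by
    intro i
    rw [durfee_lt_iff hs]
    constructor
    · rintro ⟨h1, h2⟩
      by_contra hik
      push_neg at hik
      obtain ⟨j, rfl⟩ : ∃ j, i = k + j := ⟨i - k, by omega⟩
      rw [buildL_length] at h1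
      rw [buildL_getD_right hf (by omega)] at h2
      have := buildL_g_le (k := k) (f := f) j
      omega
    · intro hik
      rw [buildL_getD_left hik, buildL_length]
      omega
  apply Nat.le_antisymm
  · by_contra hlt2
    push_neg at hlt2
    have := (hlt k).mp hlt2
    omega
  · have := (hlt (k - 1)).mpr (by omega)
    omega

include hf in
lemma buildL_conj {i : ℕ} (hi : i < k) : conj (buildL k e f) (i + 1) = k + f i := by
  unfold conj buildL
  rw [List.countP_append]
  have h1 : ((List.range k).map (fun i => k + e i)).countP (fun b => decide (i + 1 ≤ b)) = k := by
    rw [List.countP_eq_length.mpr]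
    · simp
    · intro x hx
      simp only [List.mem_map, List.mem_range] at hx
      obtain ⟨j, hj, rfl⟩ := hx
      simp; omega
  have h2 : ((List.range (f 0)).map
        (fun j => (List.range k).countP (fun i' => decide (j + 1 ≤ f i')))).countP
        (fun b => decide (i + 1 ≤ b)) = f i := by
    rw [List.countP_map]
    have hcong : ∀ j, ((fun b => decide (i + 1 ≤ b)) ∘
        (fun j => (List.range k).countP (fun i' => decide (j + 1 ≤ f i')))) j
        = decide (j < f i) := by
      intro j
      simp only [Function.comp]
      rw [Bool.eq_iff_iff]
      simp only [decide_eq_true_eq]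
      rw [buildL_g_lt_iff hf hi]
      omega
    rw [List.countP_congr (fun j _ => by rw [hcong j])]
    rw [countP_range_eq_sum]
    have : ∀ j ∈ Finset.range (f 0), (if decide (j < f i) = true then 1 else 0)
        = if j < f i then 1 else 0 := by intro j _; simp
    rw [Finset.sum_congr rfl this, Finset.sum_boole]
    have : Finset.filter (fun j => j < f i) (Finset.range (f 0)) = Finset.range (f i) := by
      ext x
      simp only [Finset.mem_filter, Finset.mem_range]
      have := hf 0 i (Nat.zero_le i)
      omega
    rw [this]
    simp
  rw [h1, h2]

include hkpos he hf in
lemma buildL_sum :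
    (buildL k e f).sum = k * k + ∑ i ∈ Finset.range k, (e i + f i) := by
  unfold buildL
  rw [List.sum_append, list_map_range_sum, list_map_range_sum]
  have h1 : ∑ i ∈ Finset.range k, (k + e i) = k * k + ∑ i ∈ Finset.range k, e i := by
    rw [Finset.sum_add_distrib, Finset.sum_const, Finset.card_range, smul_eq_mul]
  have h2 : ∑ j ∈ Finset.range (f 0), (List.range k).countP (fun i => decide (j + 1 ≤ f i))
      = ∑ i ∈ Finset.range k, f i := by
    have : ∀ j ∈ Finset.range (f 0), (List.range k).countP (fun i => decide (j + 1 ≤ f i))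
        = ∑ i ∈ Finset.range k, if j + 1 ≤ f i then 1 else 0 := by
      intro j _
      rw [countP_range_eq_sum]
      exact Finset.sum_congr rfl (fun i _ => by simp)
    rw [Finset.sum_congr rfl this, Finset.sum_comm]
    apply Finset.sum_congr rfl
    intro i hi
    rw [Finset.sum_boole]
    have hfil : Finset.filter (fun j => j + 1 ≤ f i) (Finset.range (f 0)) = Finset.range (f i) := by
      ext x
      simp only [Finset.mem_filter, Finset.mem_range]
      have := hf 0 i (Nat.zero_le i)
      omega
    rw [hfil]
    simp
  rw [h1, h2, Finset.sum_add_distrib]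
  ring

end Build



def mkPart (L : List ℕ) (hpos : ∀ x ∈ L, 0 < x) : (L.sum).Partition where
  parts := (L : Multiset ℕ)
  parts_pos := by
    intro i hi
    exact hpos i (by simpa using hi)
  parts_sum := by simp

lemma sparts_mkPart {L : List ℕ} (hpos : ∀ x ∈ L, 0 < x) (hL : L.Pairwise (· ≥ ·)) :
    sparts (mkPart L hpos) = L := by
  unfold sparts mkPart
  apply List.Perm.eq_of_pairwise' (Multiset.pairwise_sort _ _) hL
  rw [← Multiset.coe_eq_coe, Multiset.sort_eq]

lemma sparts_sorted {n : ℕ} (π : n.Partition) : (sparts π).Pairwise (· ≥ ·) :=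
  Multiset.pairwise_sort _ _

lemma sparts_pos {n : ℕ} (π : n.Partition) : ∀ x ∈ sparts π, 0 < x := by
  intro x hx
  exact π.parts_pos (by rwa [← Multiset.mem_sort (r := (· ≥ ·))])

lemma sparts_sum {n : ℕ} (π : n.Partition) : (sparts π).sum = n := by
  have h : ((sparts π : Multiset ℕ)) = π.parts := by rw [sparts, Multiset.sort_eq]
  rw [← Multiset.sum_coe, h, π.parts_sum]

lemma eq_of_sparts {n : ℕ} (π π' : n.Partition) (h : sparts π = sparts π') : π = π' := by
  have h2 : π.parts = π'.parts := by
    rw [← Multiset.sort_eq π.parts (· ≥ ·), ← Multiset.sort_eq π'.parts (· ≥ ·)]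
    exact congrArg _ h
  cases π; cases π'; simpa using h2

lemma map_range_eq {g h : ℕ → ℤ} {k : ℕ}
    (heq : (List.range k).map g = (List.range k).map h) {i : ℕ} (hi : i < k) : g i = h i := by
  have := congrArg (fun l => l.getD i 0) heq
  beta_reduce at this
  rw [List.getD_eq_getElem _ _ (by simpa using hi), List.getD_eq_getElem _ _ (by simpa using hi),
    List.getElem_map, List.getElem_map, List.getElem_range] at this
  exact this

theorem isBasis_iff {n k : ℕ} (hkpos : 0 < k) (π : n.Partition)
    (hk : durfee (sparts π) = k) :
    IsBasis π ↔
      ∀ i < k, eF (sparts π) k i = eF (sparts π) k (i + 1) ∨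
        fF (sparts π) k i = fF (sparts π) k (i + 1) := by
  set L := sparts π with hLdef
  have hL : L.Pairwise (· ≥ ·) := sparts_sorted π
  have hnsum : L.sum = n := sparts_sum π
  constructor
  · -- basis → no simultaneous drops
    intro hb
    by_contra hcon
    push_neg at hcon
    obtain ⟨i, hik, he1, hf1⟩ := hcon
    have he2 : eF L k (i + 1) < eF L k i :=
      lt_of_le_of_ne (eF_anti hL (Nat.le_succ i)) (fun h => he1 h.symm)
    have hf2 : fF L k (i + 1) < fF L k i :=
      lt_of_le_of_ne (fF_anti (Nat.le_succ i)) (fun h => hf1 h.symm)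
    set e : ℕ → ℕ := eF L k with hedef
    set f : ℕ → ℕ := fF L k with hfdef
    have he : ∀ a b, a ≤ b → e b ≤ e a := fun a b hab => eF_anti hL hab
    have hf : ∀ a b, a ≤ b → f b ≤ f a := fun a b hab => fF_anti hab
    have hepos : ∀ j ≤ i, 1 ≤ e j := fun j hj =>
      le_trans (by omega : 1 ≤ e i) (he j i hj)
    have hfpos : ∀ j ≤ i, 1 ≤ f j := fun j hj =>
      le_trans (by omega : 1 ≤ f i) (hf j i hj)
    set e' : ℕ → ℕ := fun j => e j - (if j ≤ i then 1 else 0) with he'def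
    set f' : ℕ → ℕ := fun j => f j - (if j ≤ i then 1 else 0) with hf'def
    have he' : ∀ a b, a ≤ b → e' b ≤ e' a := by
      intro a b hab
      simp only [he'def]
      by_cases hbi : b ≤ i
      · have := he a b hab; simp [hbi, le_trans hab hbi]; omega
      · by_cases hai : a ≤ i
        · have h3 := he (i + 1) b (by omega)
          have h4 := he a i hai
          simp [hbi, hai]; omega
        · have := he a b hab; simp [hbi, hai]; omega
    have hf' : ∀ a b, a ≤ b → f' b ≤ f' a := by
      intro a b hab
      simp only [hf'def]
      by_cases hbi : b ≤ i
      · have := hf a b hab; simp [hbi, le_trans hab hbi]; omega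
      · by_cases hai : a ≤ i
        · have h3 := hf (i + 1) b (by omega)
          have h4 := hf a i hai
          simp [hbi, hai]; omega
        · have := hf a b hab; simp [hbi, hai]; omega
    set L' := buildL k e' f' with hL'def
    have hL's : L'.Pairwise (· ≥ ·) := buildL_sorted he' hf'
    have hL'pos := buildL_pos hkpos hf' (e := e')
    have hL'durfee : durfee L' = k := buildL_durfee hkpos he' hf'
    set π' := mkPart L' hL'pos with hπ'def
    have hsp' : sparts π' = L' := sparts_mkPart hL'pos hL's
    have hranks : ranks L' = ranks L := by
      rw [ranks_decomp hL's hL'durfee hkpos, ranks_decomp hL hk hkpos]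
      apply List.map_congr_left
      intro j hj
      rw [List.mem_range] at hj
      have h5 : eF L' k j = e' j := by
        unfold eF
        rw [buildL_getD_left hj]; omega
      have h6 : fF L' k j = f' j := by
        unfold fF
        rw [buildL_conj hf' hj]; omega
      rw [h5, h6, show eF L k j = e j from rfl, show fF L k j = f j from rfl]
      have h8 : e' j = e j - (if j ≤ i then 1 else 0) := rfl
      have h9 : f' j = f j - (if j ≤ i then 1 else 0) := rfl
      rw [h8, h9]
      by_cases hji : j ≤ i
      · have ha := hepos j hji
        have hb2 := hfpos j hji
        rw [if_pos hji]
        omega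
      · rw [if_neg hji]
        simp
    have hle := hb L'.sum π' (by rw [hsp', hranks])
    have hsum' : L'.sum = k * k + ∑ j ∈ Finset.range k, (e' j + f' j) :=
      buildL_sum hkpos he' hf'
    have hsum : n = k * k + ∑ j ∈ Finset.range k, (e j + f j) := by
      rw [← hnsum]; exact sum_decomp hL hk hkpos
    have hkey : ∑ j ∈ Finset.range k, (e j + f j)
        = ∑ j ∈ Finset.range k, (e' j + f' j) + 2 * (i + 1) := by
      have h7 : ∀ j ∈ Finset.range k, e j + f j
          = e' j + f' j + (if j ≤ i then 2 else 0) := by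
        intro j hj
        have h8 : e' j = e j - (if j ≤ i then 1 else 0) := rfl
        have h9 : f' j = f j - (if j ≤ i then 1 else 0) := rfl
        rw [h8, h9]
        by_cases hji : j ≤ i
        · have ha := hepos j hji
          have hb2 := hfpos j hji
          rw [if_pos hji, if_pos hji]
          omega
        · rw [if_neg hji, if_neg hji]
          simp
      rw [Finset.sum_congr rfl h7, Finset.sum_add_distrib]
      congr 1
      have hfil : Finset.filter (fun j => j ≤ i) (Finset.range k) = Finset.range (i + 1) := by
        ext x
        simp only [Finset.mem_filter, Finset.mem_range]
        omega
      rw [← Finset.sum_filter, hfil, Finset.sum_const, Finset.card_range, smul_eq_mul]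
      ring
    omega
  · -- no simultaneous drops → basis
    intro hgood m π' hr
    set L' := sparts π' with hL'def
    have hL' : L'.Pairwise (· ≥ ·) := sparts_sorted π'
    have hk' : durfee L' = k := by
      have := congrArg List.length hr
      simp only [ranks, List.length_map, List.length_range] at this
      rw [this, hk]
    have hrk := hr
    rw [ranks_decomp hL' hk' hkpos, ranks_decomp hL hk hkpos] at hrk
    have hrank : ∀ j ≤ k, (eF L k j : ℤ) - fF L k j = (eF L' k j : ℤ) - fF L' k j := by
      intro j hj
      rcases Nat.lt_or_ge j k with h | h
      · exact (map_range_eq hrk h).symm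
      · rw [eF_zero hL hk h, fF_zero hL hk h, eF_zero hL' hk' h, fF_zero hL' hk' h]
    have key : ∀ d i, i + d = k → fF L k i ≤ fF L' k i := by
      intro d
      induction d with
      | zero =>
        intro i hi
        rw [fF_zero hL hk (by omega)]
        exact Nat.zero_le _
      | succ d ih =>
        intro i hi
        have hik : i < k := by omega
        have hnext : fF L k (i + 1) ≤ fF L' k (i + 1) := ih (i + 1) (by omega)
        rcases hgood i hik with hcase | hcase
        · have h1 := hrank i (by omega)
          have h2 := hrank (i + 1) (by omega)
          have h3 : eF L' k (i + 1) ≤ eF L' k i := eF_anti hL' (Nat.le_succ i)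
          omega
        · have h4 : fF L' k (i + 1) ≤ fF L' k i := fF_anti (Nat.le_succ i)
          omega
    have hple : ∀ j ∈ Finset.range k, eF L k j + fF L k j ≤ eF L' k j + fF L' k j := by
      intro j hj
      rw [Finset.mem_range] at hj
      have h1 := hrank j (by omega)
      have h2 := key (k - j) j (by omega)
      omega
    have h5 : L.sum ≤ L'.sum := by
      rw [sum_decomp hL hk hkpos, sum_decomp hL' hk' hkpos]
      exact Nat.add_le_add_left (Finset.sum_le_sum hple) _
    have h6 : L'.sum = m := sparts_sum π'
    omega


end Aux


/-! ### Stage 6a: reconstruction and primary partitions -/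
section Stage6a
set_option linter.unusedSectionVars false

lemma countP_range_le_const (m c : ℕ) :
    (List.range m).countP (fun i => i + 1 ≤ c) = min m c := by
  induction m with
  | zero => simp
  | succ m ih =>
    rw [List.range_succ, List.countP_append, ih]
    simp only [List.countP_cons, List.countP_nil]
    by_cases h : m + 1 ≤ c
    · simp [h]; omega
    · simp [h]; omega

lemma telescope_sum {d : ℕ → ℕ} (hd : ∀ a b, a ≤ b → d b ≤ d a) {k : ℕ} (hdk : d k = 0) :
    ∀ i, i ≤ k → ∑ j ∈ Finset.Ico i k, (d j - d (j + 1)) = d i := by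
  suffices h : ∀ m i, i + m = k → ∑ j ∈ Finset.Ico i k, (d j - d (j + 1)) = d i by
    intro i hik; exact h (k - i) i (by omega)
  intro m
  induction m with
  | zero =>
    intro i hik
    have hik' : i = k := by omega
    subst hik'
    simp [hdk]
  | succ m ih =>
    intro i hik
    rw [Finset.sum_eq_sum_Ico_succ_bot (by omega : i < k), ih (i + 1) (by omega)]
    have := hd i (i + 1) (by omega)
    omega

/-- Build an `n`-partition from a list of positive parts summing to `n`. -/
def mkPartN (n : ℕ) (L : List ℕ) (hpos : ∀ x ∈ L, 0 < x) (hsum : L.sum = n) : n.Partition where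
  parts := (L : Multiset ℕ)
  parts_pos := by
    intro i hi
    exact hpos i (by simpa using hi)
  parts_sum := by simpa using hsum

lemma sparts_mkPartN {n : ℕ} {L : List ℕ} (hpos : ∀ x ∈ L, 0 < x) (hsum : L.sum = n)
    (hL : L.Pairwise (· ≥ ·)) : sparts (mkPartN n L hpos hsum) = L := by
  unfold sparts mkPartN
  apply List.Perm.eq_of_pairwise' (Multiset.pairwise_sort _ _) hL
  rw [← Multiset.coe_eq_coe, Multiset.sort_eq]

lemma getD_drop {L : List ℕ} {k j : ℕ} (hj : k + j < L.length) :
    (L.drop k).getD j 0 = L.getD (k + j) 0 := by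
  rw [List.getD_eq_getElem _ _ (by simp; omega), List.getD_eq_getElem _ _ hj]
  simp [List.getElem_drop]

lemma sorted_drop {L : List ℕ} (hL : L.Pairwise (· ≥ ·)) (k : ℕ) :
    (L.drop k).Pairwise (· ≥ ·) := List.Pairwise.sublist (List.drop_sublist k L) hL

/-- Reconstruction: every partition list is `buildL` of its excess data. -/
lemma reconstruction {L : List ℕ} {k : ℕ} (hL : L.Pairwise (· ≥ ·)) (hpos : ∀ x ∈ L, 0 < x)
    (hk : durfee L = k) (hkpos : 0 < k) : buildL k (eF L k) (fF L k) = L := by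
  have hlen : k ≤ L.length := hk ▸ durfee_le_length L
  have hconj1 : conj L 1 = L.length := by
    unfold conj
    rw [List.countP_eq_length.mpr]
    intro x hx
    simpa using Nat.one_le_iff_ne_zero.mpr (Nat.pos_iff_ne_zero.mp (hpos x hx))
  have hf0 : fF L k 0 = L.length - k := by
    unfold fF
    rw [hconj1]
  have hblen : (buildL k (eF L k) (fF L k)).length = L.length := by
    rw [buildL_length, hf0]; omega
  apply List.ext_getElem hblen
  intro i h1 h2
  rw [← List.getD_eq_getElem _ 0 h1, ← List.getD_eq_getElem _ 0 h2]
  rcases Nat.lt_or_ge i k with hik | hik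
  · rw [buildL_getD_left hik, getD_eq_eF hL hk hik]
  · obtain ⟨j, rfl⟩ : ∃ j, i = k + j := ⟨i - k, by omega⟩
    have hjlen : k + j < L.length := by rwa [hblen] at h1
    have hjf : j < fF L k 0 := by omega
    rw [buildL_getD_right (fun a b hab => fF_anti hab) hjf]
    set M := L.drop k with hM
    have hMs : M.Pairwise (· ≥ ·) := sorted_drop hL k
    have hMlen : M.length = L.length - k := by simp [hM]
    have hgd : M.getD j 0 = L.getD (k + j) 0 := getD_drop hjlen
    have hjM : j < M.length := by omega
    have hMle : M.getD j 0 ≤ k := by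
      rw [hgd]
      exact getD_le_of_ge hL hk (by omega)
    have hcong : ∀ x ∈ List.range k,
        (decide (j + 1 ≤ fF L k x) = true ↔ decide (x + 1 ≤ M.getD j 0) = true) := by
      intro x hx
      rw [List.mem_range] at hx
      have hcd : M.countP (fun y => x + 1 ≤ y) = fF L k x := countP_drop_eq_fF hL hk hx
      simp only [decide_eq_true_eq]
      rw [← hcd]
      have hiff := countP_sorted_lt_iff M hMs (x + 1) j
      constructor
      · intro h
        have := hiff.mp (by omega)
        omega
      · intro h
        have := hiff.mpr ⟨hjM, by omega⟩
        omega
    rw [List.countP_congr hcong]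
    have := countP_range_le_const k (M.getD j 0)
    rw [hgd] at this hMle ⊢
    omega

lemma primary_durfee {L : List ℕ} {k : ℕ} (hL : L.Pairwise (· ≥ ·)) (hP : Primary L k)
    (hkpos : 0 < k) : durfee L = k := by
  have hlt : ∀ i, i < durfee L ↔ i < k := by
    intro i
    rw [durfee_lt_iff hL]
    constructor
    · rintro ⟨hlen, _⟩
      rwa [hP.1] at hlen
    · intro hik
      have hilen : i < L.length := by rw [hP.1]; exact hik
      refine ⟨hilen, ?_⟩
      have hx : k ≤ L.getD i 0 := by
        rw [List.getD_eq_getElem _ _ hilen]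
        exact hP.2 _ (L.getElem_mem hilen)
      omega
  apply Nat.le_antisymm
  · by_contra hlt2
    push_neg at hlt2
    have := (hlt k).mp hlt2
    omega
  · have := (hlt (k - 1)).mpr (by omega)
    omega

lemma primary_fF {L : List ℕ} {k : ℕ} (hP : Primary L k) : ∀ i, fF L k i = 0 := by
  intro i
  have h1 : conj L (i + 1) ≤ L.length := List.countP_le_length
  have h2 := hP.1
  unfold fF
  omega

lemma primary_recon {L : List ℕ} {k : ℕ} (hL : L.Pairwise (· ≥ ·)) (hpos : ∀ x ∈ L, 0 < x)
    (hP : Primary L k) (hkpos : 0 < k) : buildL k (eF L k) (fun _ => 0) = L := by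
  have hfF : (fun _ => (0 : ℕ)) = fF L k := funext fun i => (primary_fF hP i).symm
  rw [hfF, reconstruction hL hpos (primary_durfee hL hP hkpos) hkpos]

/-- The set of indices where the row excess drops. -/
noncomputable def drops (L : List ℕ) (k : ℕ) : Finset ℕ :=
  (Finset.range k).filter (fun j => eF L k (j + 1) < eF L k j)

lemma tP_eq_card {L : List ℕ} {k : ℕ} (hL : L.Pairwise (· ≥ ·)) (hP : Primary L k)
    (hkpos : 0 < k) : tP L k = (drops L k).card := by
  have hd := primary_durfee hL hP hkpos
  obtain ⟨m, rfl⟩ : ∃ m, k = m + 1 := ⟨k - 1, by omega⟩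
  unfold tP drops
  rw [Finset.range_add_one, Finset.filter_insert]
  have hfc : Finset.filter (fun j => eF L (m + 1) (j + 1) < eF L (m + 1) j) (Finset.range m)
      = Finset.filter (fun i => L.getD (i + 1) 0 < L.getD i 0) (Finset.range m) := by
    apply Finset.filter_congr
    intro j hj
    rw [Finset.mem_range] at hj
    have ha := getD_eq_eF hL hd (show j < m + 1 by omega)
    have hb := getD_eq_eF hL hd (show j + 1 < m + 1 by omega)
    constructor <;> intro <;> omega
  have hiff : (eF L (m + 1) (m + 1) < eF L (m + 1) m) ↔ (m + 1 < L.getD m 0) := by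
    have h0 : eF L (m + 1) (m + 1) = 0 := eF_zero hL hd (le_refl _)
    have hm := getD_eq_eF hL hd (show m < m + 1 by omega)
    constructor <;> intro <;> omega
  simp only [Nat.add_sub_cancel]
  by_cases hck : eF L (m + 1) (m + 1) < eF L (m + 1) m
  · rw [if_pos hck, Finset.card_insert_of_notMem (fun hmem => by
      have := Finset.mem_of_mem_filter m hmem
      simp at this), hfc, if_pos (hiff.mp hck)]
  · rw [if_neg hck, hfc, if_neg (fun h => hck (hiff.mpr h))]
    omega

end Stage6a


/-! ### Stage 6b: the bijection -/
section Stage6b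
set_option linter.unusedSectionVars false

/-- Sum of the row and column excesses. -/
def deltaF (L : List ℕ) (k : ℕ) (i : ℕ) : ℕ := eF L k i + fF L k i
def zeroF : ℕ → ℕ := fun _ => 0

lemma deltaF_anti {L : List ℕ} {k : ℕ} (hL : L.Pairwise (· ≥ ·)) :
    ∀ a b, a ≤ b → deltaF L k b ≤ deltaF L k a := fun a b hab =>
  Nat.add_le_add (eF_anti hL hab) (fF_anti hab)

lemma zeroF_anti : ∀ a b : ℕ, a ≤ b → zeroF b ≤ zeroF a := fun _ _ _ => le_refl 0

noncomputable def eOf (L : List ℕ) (k : ℕ) (S : Finset ℕ) (i : ℕ) : ℕ :=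
  ∑ j ∈ Finset.Ico i k, if j ∈ S then eF L k j - eF L k (j + 1) else 0

noncomputable def fOf (L : List ℕ) (k : ℕ) (S : Finset ℕ) (i : ℕ) : ℕ :=
  ∑ j ∈ Finset.Ico i k, if j ∉ S then eF L k j - eF L k (j + 1) else 0

variable {L : List ℕ} {k : ℕ} {S : Finset ℕ}

lemma eOf_anti : ∀ a b, a ≤ b → eOf L k S b ≤ eOf L k S a := fun a b hab =>
  Finset.sum_le_sum_of_subset (Finset.Ico_subset_Ico hab (le_refl k))

lemma fOf_anti : ∀ a b, a ≤ b → fOf L k S b ≤ fOf L k S a := fun a b hab =>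
  Finset.sum_le_sum_of_subset (Finset.Ico_subset_Ico hab (le_refl k))

lemma eOf_zero {i : ℕ} (hik : k ≤ i) : eOf L k S i = 0 := by
  unfold eOf
  rw [Finset.Ico_eq_empty (by omega), Finset.sum_empty]

lemma fOf_zero {i : ℕ} (hik : k ≤ i) : fOf L k S i = 0 := by
  unfold fOf
  rw [Finset.Ico_eq_empty (by omega), Finset.sum_empty]

lemma eOf_peel {i : ℕ} (hik : i < k) :
    eOf L k S i = (if i ∈ S then eF L k i - eF L k (i + 1) else 0) + eOf L k S (i + 1) :=
  Finset.sum_eq_sum_Ico_succ_bot hik _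

lemma fOf_peel {i : ℕ} (hik : i < k) :
    fOf L k S i = (if i ∉ S then eF L k i - eF L k (i + 1) else 0) + fOf L k S (i + 1) :=
  Finset.sum_eq_sum_Ico_succ_bot hik _

lemma eOf_add_fOf (hL : L.Pairwise (· ≥ ·)) (hd : durfee L = k) :
    ∀ i, eOf L k S i + fOf L k S i = eF L k i := by
  intro i
  rcases le_or_gt i k with hik | hik
  · unfold eOf fOf
    rw [← Finset.sum_add_distrib]
    have hcong : ∀ j ∈ Finset.Ico i k,
        ((if j ∈ S then eF L k j - eF L k (j + 1) else 0) +
          if j ∉ S then eF L k j - eF L k (j + 1) else 0) = eF L k j - eF L k (j + 1) := by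
      intro j hj
      by_cases hjS : j ∈ S <;> simp [hjS]
    rw [Finset.sum_congr rfl hcong]
    exact telescope_sum (fun a b hab => eF_anti hL hab) (eF_zero hL hd (le_refl k)) i hik
  · rw [eOf_zero (by omega), fOf_zero (by omega), eF_zero hL hd (by omega)]

/-- The primary partition associated to a partition with Durfee square size `k`. -/
noncomputable def primOf (n k : ℕ) (π : n.Partition) (hd : durfee (sparts π) = k)
    (hkpos : 0 < k) : n.Partition :=
  mkPartN n (buildL k (deltaF (sparts π) k) zeroF)
    (buildL_pos hkpos zeroF_anti)
    (by
      rw [buildL_sum hkpos (deltaF_anti (sparts_sorted π)) zeroF_anti]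
      have h1 := sum_decomp (sparts_sorted π) hd hkpos
      have h2 := sparts_sum π
      have h3 : ∀ i ∈ Finset.range k, deltaF (sparts π) k i + zeroF i
          = eF (sparts π) k i + fF (sparts π) k i := by
        intro i _
        unfold deltaF zeroF
        omega
      rw [Finset.sum_congr rfl h3]
      omega)

lemma sparts_primOf {n k : ℕ} (π : n.Partition) (hd : durfee (sparts π) = k) (hkpos : 0 < k) :
    sparts (primOf n k π hd hkpos) = buildL k (deltaF (sparts π) k) zeroF :=
  sparts_mkPartN _ _ (buildL_sorted (deltaF_anti (sparts_sorted π)) zeroF_anti)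

lemma primOf_primary {n k : ℕ} (π : n.Partition) (hd : durfee (sparts π) = k) (hkpos : 0 < k) :
    Primary (sparts (primOf n k π hd hkpos)) k := by
  rw [sparts_primOf]
  constructor
  · rw [buildL_length]
    rfl
  · intro x hx
    unfold buildL zeroF at hx
    simp only [List.range_zero, List.map_nil, List.append_nil, List.mem_map,
      List.mem_range] at hx
    obtain ⟨i, hi, rfl⟩ := hx
    omega

lemma primOf_eF {n k : ℕ} (π : n.Partition) (hd : durfee (sparts π) = k) (hkpos : 0 < k) :
    ∀ i, eF (sparts (primOf n k π hd hkpos)) k i = eF (sparts π) k i + fF (sparts π) k i := by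
  intro i
  rcases Nat.lt_or_ge i k with hik | hik
  · unfold eF
    rw [sparts_primOf, buildL_getD_left hik]
    unfold deltaF eF fF
    omega
  · have hdp : durfee (sparts (primOf n k π hd hkpos)) = k :=
      primary_durfee (sparts_sorted _) (primOf_primary π hd hkpos) hkpos
    rw [eF_zero (sparts_sorted _) hdp hik, eF_zero (sparts_sorted π) hd hik,
      fF_zero (sparts_sorted π) hd hik]

/-- The basis partition associated to a primary partition and a subset of its corners. -/
noncomputable def basisOf (n k : ℕ) (π' : n.Partition) (S : Finset ℕ)
    (hP : Primary (sparts π') k) (hkpos : 0 < k) : n.Partition :=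
  mkPartN n (buildL k (eOf (sparts π') k S) (fOf (sparts π') k S))
    (buildL_pos hkpos fOf_anti)
    (by
      rw [buildL_sum hkpos eOf_anti fOf_anti]
      have hd := primary_durfee (sparts_sorted π') hP hkpos
      have hcong : ∀ i ∈ Finset.range k,
          eOf (sparts π') k S i + fOf (sparts π') k S i
            = eF (sparts π') k i + fF (sparts π') k i := by
        intro i _
        rw [eOf_add_fOf (sparts_sorted π') hd, primary_fF hP i]
        omega
      rw [Finset.sum_congr rfl hcong, ← sum_decomp (sparts_sorted π') hd hkpos, sparts_sum])

lemma sparts_basisOf {n k : ℕ} (π' : n.Partition) (S : Finset ℕ)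
    (hP : Primary (sparts π') k) (hkpos : 0 < k) :
    sparts (basisOf n k π' S hP hkpos)
      = buildL k (eOf (sparts π') k S) (fOf (sparts π') k S) :=
  sparts_mkPartN _ _ (buildL_sorted eOf_anti fOf_anti)

lemma basisOf_durfee {n k : ℕ} (π' : n.Partition) (S : Finset ℕ)
    (hP : Primary (sparts π') k) (hkpos : 0 < k) :
    durfee (sparts (basisOf n k π' S hP hkpos)) = k := by
  rw [sparts_basisOf]
  exact buildL_durfee hkpos eOf_anti fOf_anti

lemma basisOf_eF {n k : ℕ} (π' : n.Partition) (S : Finset ℕ)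
    (hP : Primary (sparts π') k) (hkpos : 0 < k) :
    ∀ i, eF (sparts (basisOf n k π' S hP hkpos)) k i = eOf (sparts π') k S i := by
  intro i
  rcases Nat.lt_or_ge i k with hik | hik
  · have h1 : (buildL k (eOf (sparts π') k S) (fOf (sparts π') k S)).getD i 0
        = k + eOf (sparts π') k S i := buildL_getD_left hik
    unfold eF
    rw [sparts_basisOf, h1]
    omega
  · rw [eF_zero (sparts_sorted _) (basisOf_durfee π' S hP hkpos) hik, eOf_zero hik]

lemma basisOf_fF {n k : ℕ} (π' : n.Partition) (S : Finset ℕ)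
    (hP : Primary (sparts π') k) (hkpos : 0 < k) :
    ∀ i, fF (sparts (basisOf n k π' S hP hkpos)) k i = fOf (sparts π') k S i := by
  intro i
  rcases Nat.lt_or_ge i k with hik | hik
  · have h1 : conj (buildL k (eOf (sparts π') k S) (fOf (sparts π') k S)) (i + 1)
        = k + fOf (sparts π') k S i := buildL_conj fOf_anti hik
    unfold fF
    rw [sparts_basisOf, h1]
    omega
  · rw [fF_zero (sparts_sorted _) (basisOf_durfee π' S hP hkpos) hik, fOf_zero hik]

lemma basisOf_isBasis {n k : ℕ} (π' : n.Partition) (S : Finset ℕ)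
    (hP : Primary (sparts π') k) (hkpos : 0 < k) :
    IsBasis (basisOf n k π' S hP hkpos) := by
  rw [isBasis_iff hkpos _ (basisOf_durfee π' S hP hkpos)]
  intro i hik
  rw [basisOf_eF π' S hP hkpos, basisOf_eF π' S hP hkpos,
    basisOf_fF π' S hP hkpos, basisOf_fF π' S hP hkpos]
  by_cases hiS : i ∈ S
  · right
    rw [fOf_peel hik, if_neg (not_not_intro hiS)]
    omega
  · left
    rw [eOf_peel hik, if_neg hiS]
    omega

lemma eOf_primOf {n k : ℕ} (π : n.Partition) (hd : durfee (sparts π) = k) (hkpos : 0 < k)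
    (hdisj : ∀ i < k, eF (sparts π) k i = eF (sparts π) k (i + 1) ∨
      fF (sparts π) k i = fF (sparts π) k (i + 1)) :
    ∀ i, eOf (sparts (primOf n k π hd hkpos)) k (drops (sparts π) k) i = eF (sparts π) k i := by
  intro i
  have hL : (sparts π).Pairwise (· ≥ ·) := sparts_sorted π
  rcases le_or_gt i k with hik | hik
  · unfold eOf
    have hcong : ∀ j ∈ Finset.Ico i k,
        (if j ∈ drops (sparts π) k then
            eF (sparts (primOf n k π hd hkpos)) k j
              - eF (sparts (primOf n k π hd hkpos)) k (j + 1) else 0)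
          = eF (sparts π) k j - eF (sparts π) k (j + 1) := by
      intro j hj
      rw [Finset.mem_Ico] at hj
      have h1 := primOf_eF π hd hkpos j
      have h2 := primOf_eF π hd hkpos (j + 1)
      by_cases hjS : j ∈ drops (sparts π) k
      · rw [if_pos hjS]
        simp only [drops, Finset.mem_filter, Finset.mem_range] at hjS
        rcases hdisj j hj.2 with hc | hc <;> omega
      · rw [if_neg hjS]
        have hnd : ¬ (eF (sparts π) k (j + 1) < eF (sparts π) k j) := by
          intro hlt
          exact hjS (by
            simp only [drops, Finset.mem_filter, Finset.mem_range]
            exact ⟨hj.2, hlt⟩)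
        have := eF_anti (k := k) hL (show j ≤ j + 1 by omega)
        omega
    rw [Finset.sum_congr rfl hcong]
    exact telescope_sum (fun a b hab => eF_anti hL hab) (eF_zero hL hd (le_refl k)) i hik
  · rw [eOf_zero (by omega), eF_zero hL hd (by omega)]

lemma fOf_primOf {n k : ℕ} (π : n.Partition) (hd : durfee (sparts π) = k) (hkpos : 0 < k)
    (hdisj : ∀ i < k, eF (sparts π) k i = eF (sparts π) k (i + 1) ∨
      fF (sparts π) k i = fF (sparts π) k (i + 1)) :
    ∀ i, fOf (sparts (primOf n k π hd hkpos)) k (drops (sparts π) k) i = fF (sparts π) k i := by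
  intro i
  have hL : (sparts π).Pairwise (· ≥ ·) := sparts_sorted π
  rcases le_or_gt i k with hik | hik
  · unfold fOf
    have hcong : ∀ j ∈ Finset.Ico i k,
        (if j ∉ drops (sparts π) k then
            eF (sparts (primOf n k π hd hkpos)) k j
              - eF (sparts (primOf n k π hd hkpos)) k (j + 1) else 0)
          = fF (sparts π) k j - fF (sparts π) k (j + 1) := by
      intro j hj
      rw [Finset.mem_Ico] at hj
      have h1 := primOf_eF π hd hkpos j
      have h2 := primOf_eF π hd hkpos (j + 1)
      by_cases hjS : j ∈ drops (sparts π) k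
      · rw [if_neg (not_not_intro hjS)]
        simp only [drops, Finset.mem_filter, Finset.mem_range] at hjS
        rcases hdisj j hj.2 with hc | hc <;> omega
      · rw [if_pos hjS]
        have hnd : ¬ (eF (sparts π) k (j + 1) < eF (sparts π) k j) := by
          intro hlt
          exact hjS (by
            simp only [drops, Finset.mem_filter, Finset.mem_range]
            exact ⟨hj.2, hlt⟩)
        have := eF_anti (k := k) hL (show j ≤ j + 1 by omega)
        omega
    rw [Finset.sum_congr rfl hcong]
    exact telescope_sum (fun a b hab => fF_anti hab) (fF_zero hL hd (le_refl k)) i hik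
  · rw [fOf_zero (by omega), fF_zero hL hd (by omega)]

end Stage6b

theorem statement3 (n k : ℕ) (hn : 0 < n) (hk : 0 < k) :
    bCount n k =
      ∑ π ∈ Finset.univ.filter (fun π : n.Partition => Primary (sparts π) k),
        2 ^ tP (sparts π) k := by
  classical
  have hA : bCount n k
      = (Finset.univ.filter
          (fun π : n.Partition => IsBasis π ∧ durfee (sparts π) = k)).card := by
    rw [bCount, Nat.card_eq_fintype_card]
    exact Fintype.card_subtype _
  have hRHS : (∑ π ∈ Finset.univ.filter (fun π : n.Partition => Primary (sparts π) k),
        2 ^ tP (sparts π) k)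
      = ((Finset.univ.filter (fun π : n.Partition => Primary (sparts π) k)).sigma
          (fun π' => (drops (sparts π') k).powerset)).card := by
    rw [Finset.card_sigma]
    apply Finset.sum_congr rfl
    intro π' hπ'
    rw [Finset.card_powerset,
      tP_eq_card (sparts_sorted π') (Finset.mem_filter.mp hπ').2 hk]
  rw [hA, hRHS]
  refine Finset.card_bij'
    (fun π hπ => ⟨primOf n k π (Finset.mem_filter.mp hπ).2.2 hk, drops (sparts π) k⟩)
    (fun x hx => basisOf n k x.1 x.2
      (Finset.mem_filter.mp (Finset.mem_sigma.mp hx).1).2 hk) ?_ ?_ ?_ ?_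
  · -- forward lands in the sigma set
    intro π hπ
    obtain ⟨hbasis, hd⟩ := (Finset.mem_filter.mp hπ).2
    rw [Finset.mem_sigma]
    constructor
    · exact Finset.mem_filter.mpr ⟨Finset.mem_univ _, primOf_primary π hd hk⟩
    · rw [Finset.mem_powerset]
      intro j hj
      simp only [drops, Finset.mem_filter, Finset.mem_range] at hj ⊢
      obtain ⟨hjr, hjd⟩ := hj
      refine ⟨hjr, ?_⟩
      rw [primOf_eF π hd hk, primOf_eF π hd hk]
      have := fF_anti (L := sparts π) (k := k) (show j ≤ j + 1 by omega)
      omega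
  · -- backward lands in the basis set
    intro x hx
    have hP := (Finset.mem_filter.mp (Finset.mem_sigma.mp hx).1).2
    exact Finset.mem_filter.mpr ⟨Finset.mem_univ _,
      basisOf_isBasis x.1 x.2 hP hk, basisOf_durfee x.1 x.2 hP hk⟩
  · -- left inverse
    intro π hπ
    obtain ⟨hbasis, hd⟩ := (Finset.mem_filter.mp hπ).2
    have hL : (sparts π).Pairwise (· ≥ ·) := sparts_sorted π
    have hdisj := (isBasis_iff hk π hd).mp hbasis
    apply eq_of_sparts
    rw [sparts_basisOf]
    have he2 : eOf (sparts (primOf n k π hd hk)) k (drops (sparts π) k) = eF (sparts π) k :=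
      funext (eOf_primOf π hd hk hdisj)
    have hf2 : fOf (sparts (primOf n k π hd hk)) k (drops (sparts π) k) = fF (sparts π) k :=
      funext (fOf_primOf π hd hk hdisj)
    rw [he2, hf2]
    exact reconstruction hL (sparts_pos π) hd hk
  · -- right inverse
    intro x hx
    obtain ⟨π', S⟩ := x
    rw [Finset.mem_sigma] at hx
    have hP : Primary (sparts π') k := (Finset.mem_filter.mp hx.1).2
    have hS : S ⊆ drops (sparts π') k := Finset.mem_powerset.mp hx.2
    have hL' : (sparts π').Pairwise (· ≥ ·) := sparts_sorted π'
    have hd' := primary_durfee hL' hP hk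
    have hbe := basisOf_eF π' S hP hk
    have hbf := basisOf_fF π' S hP hk
    have hc1 : primOf n k (basisOf n k π' S hP hk) (basisOf_durfee π' S hP hk) hk = π' := by
      apply eq_of_sparts
      rw [sparts_primOf]
      have h1 : deltaF (sparts (basisOf n k π' S hP hk)) k = eF (sparts π') k := by
        funext i
        unfold deltaF
        rw [hbe i, hbf i, eOf_add_fOf hL' hd']
      rw [h1]
      exact primary_recon hL' (sparts_pos π') hP hk
    have hc2 : drops (sparts (basisOf n k π' S hP hk)) k = S := by
      ext j
      simp only [drops, Finset.mem_filter, Finset.mem_range]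
      constructor
      · rintro ⟨hjk, hlt⟩
        rw [hbe (j + 1), hbe j] at hlt
        by_contra hjS
        rw [eOf_peel hjk, if_neg hjS] at hlt
        omega
      · intro hjS
        have hj2 := hS hjS
        simp only [drops, Finset.mem_filter, Finset.mem_range] at hj2
        refine ⟨hj2.1, ?_⟩
        rw [hbe (j + 1), hbe j, eOf_peel hj2.1, if_pos hjS]
        omega
    exact Sigma.ext hc1 (heq_of_eq hc2)

end BasisPartitions
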